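/- Let a : J → [0,1] with J a finite nonempty index set, b ∈ [0,1], and S = { x : J → [0,1] : max_{j∈J} φ(a_j, x_j) = b }. Then S is nonempty if and only if (i) a_j ≤ b / w^(1/p) for all j ∈ J, and (ii) there exists j₀ ∈ J with b^p < 1 - w or a_{j₀} ≥ ((b^p + w - 1)/w)^(1/p). -/

import Mathlib

noncomputable def phi (w p a x : ℝ) : ℝ := (w * a ^ p + (1 - w) * x ^ p) ^ (1 / p)

theorem stmt5 {J : Type*} [Fintype J] [Nonempty J] (w p : ℝ)
    (hw : w ∈ Set.Ioo (0:ℝ) 1) (hp : 0 < p)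
    (a : J → ℝ) (ha : ∀ j, a j ∈ Set.Icc (0:ℝ) 1) (b : ℝ) (hb : b ∈ Set.Icc (0:ℝ) 1) :
    (∃ x : J → ℝ, (∀ j, x j ∈ Set.Icc (0:ℝ) 1) ∧
        Finset.univ.sup' Finset.univ_nonempty (fun j => phi w p (a j) (x j)) = b) ↔
    ((∀ j, a j ≤ b / w ^ (1 / p)) ∧
      (∃ j₀, b ^ p < 1 - w ∨ ((b ^ p + w - 1) / w) ^ (1 / p) ≤ a j₀)) := by
  obtain ⟨hw0, hw1⟩ := hw
  obtain ⟨hb0, hb1⟩ := hb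
  have hq : (0:ℝ) < 1 / p := by positivity
  have hwq : (0:ℝ) < w ^ (1/p) := Real.rpow_pos_of_pos hw0 _
  have h1w : (0:ℝ) < 1 - w := by linarith
  have key : ∀ t : ℝ, 0 ≤ t → (t ^ (1/p)) ^ p = t := by
    intro t ht
    rw [← Real.rpow_mul ht, one_div, inv_mul_cancel₀ hp.ne', Real.rpow_one]
  have key2 : ∀ t : ℝ, 0 ≤ t → (t ^ p) ^ (1/p) = t := by
    intro t ht
    rw [← Real.rpow_mul ht, mul_one_div, div_self hp.ne', Real.rpow_one]
  constructor
  · rintro ⟨x, hx, hsup⟩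
    have hphib : ∀ j, phi w p (a j) (x j) ≤ b := by
      intro j
      rw [← hsup]
      exact Finset.le_sup' (fun j => phi w p (a j) (x j)) (Finset.mem_univ j)
    constructor
    · intro j
      have haj := ha j
      have hxj := hx j
      have h1 : w * a j ^ p ≤ w * a j ^ p + (1 - w) * (x j) ^ p := by
        have : 0 ≤ (x j) ^ p := Real.rpow_nonneg hxj.1 _
        nlinarith
      have h2 : (w * a j ^ p) ^ (1/p) ≤ b := by
        refine le_trans ?_ (hphib j)
        exact Real.rpow_le_rpow (mul_nonneg hw0.le (Real.rpow_nonneg haj.1 _)) h1 hq.le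
      have h3 : (w * a j ^ p) ^ (1/p) = w ^ (1/p) * a j := by
        rw [Real.mul_rpow hw0.le (Real.rpow_nonneg haj.1 _), key2 _ haj.1]
      rw [le_div_iff₀ hwq, mul_comm]
      rw [h3] at h2
      exact h2
    · obtain ⟨j₀, _, hj₀⟩ := Finset.exists_mem_eq_sup' (Finset.univ_nonempty (α := J))
        (fun j => phi w p (a j) (x j))
      refine ⟨j₀, ?_⟩
      by_cases hcase : b ^ p < 1 - w
      · exact Or.inl hcase
      · refine Or.inr ?_
        push_neg at hcase
        have haj := ha j₀
        have hxj := hx j₀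
        have heq : phi w p (a j₀) (x j₀) = b := by rw [← hj₀, hsup]
        have hin : 0 ≤ w * a j₀ ^ p + (1 - w) * (x j₀) ^ p := by
          have h0 : 0 ≤ (x j₀) ^ p := Real.rpow_nonneg hxj.1 _
          have h0' : 0 ≤ (a j₀) ^ p := Real.rpow_nonneg haj.1 _
          nlinarith
        have hbp : b ^ p = w * a j₀ ^ p + (1 - w) * (x j₀) ^ p := by
          rw [← heq]; exact (congrArg (· ^ p) rfl).trans (key _ hin)
        have hxp1 : (x j₀) ^ p ≤ 1 := Real.rpow_le_one hxj.1 hxj.2 hp.le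
        have h4 : (b ^ p + w - 1) / w ≤ a j₀ ^ p := by
          rw [div_le_iff₀ hw0]
          nlinarith
        calc ((b ^ p + w - 1) / w) ^ (1/p) ≤ (a j₀ ^ p) ^ (1/p) := by
              apply Real.rpow_le_rpow _ h4 hq.le
              rw [div_nonneg_iff]; left; constructor <;> linarith
          _ = a j₀ := key2 _ (ha j₀).1
  · rintro ⟨hi, j₀, hii⟩
    set T : J → ℝ := fun j => (b ^ p - w * a j ^ p) / (1 - w) with hT
    have hwap : ∀ j, w * a j ^ p ≤ b ^ p := by
      intro j
      have haj := ha j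
      have h1 : w ^ (1/p) * a j ≤ b := by
        rw [← le_div_iff₀' hwq]; exact hi j
      have h2 : (w ^ (1/p) * a j) ^ p ≤ b ^ p :=
        Real.rpow_le_rpow (mul_nonneg hwq.le haj.1) h1 hp.le
      rwa [Real.mul_rpow hwq.le haj.1, key _ hw0.le] at h2
    have hTnn : ∀ j, 0 ≤ T j := by
      intro j
      apply div_nonneg _ h1w.le
      linarith [hwap j]
    set x : J → ℝ := fun j => min 1 (T j ^ (1/p)) with hxdef
    have hx01 : ∀ j, x j ∈ Set.Icc (0:ℝ) 1 := by
      intro j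
      exact ⟨le_min zero_le_one (Real.rpow_nonneg (hTnn j) _), min_le_left _ _⟩
    have hxple : ∀ j, (x j) ^ p ≤ T j := by
      intro j
      have h1 : x j ≤ T j ^ (1/p) := min_le_right _ _
      have h2 : (x j) ^ p ≤ (T j ^ (1/p)) ^ p :=
        Real.rpow_le_rpow (hx01 j).1 h1 hp.le
      rwa [key _ (hTnn j)] at h2
    have hphile : ∀ j, phi w p (a j) (x j) ≤ b := by
      intro j
      have h1 : w * a j ^ p + (1 - w) * (x j) ^ p ≤ b ^ p := by
        have := hxple j
        have hT' : (1 - w) * T j = b ^ p - w * a j ^ p := by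
          show (1 - w) * ((b ^ p - w * a j ^ p) / (1 - w)) = _
          rw [mul_comm]; exact div_mul_cancel₀ _ h1w.ne'
        nlinarith
      calc phi w p (a j) (x j) ≤ (b ^ p) ^ (1/p) := by
            apply Real.rpow_le_rpow _ h1 hq.le
            have h0 : 0 ≤ (x j) ^ p := Real.rpow_nonneg (hx01 j).1 _
            have h0' : 0 ≤ (a j) ^ p := Real.rpow_nonneg (ha j).1 _
            nlinarith
        _ = b := key2 _ hb0
    have hT1 : T j₀ ≤ 1 := by
      rw [div_le_one h1w]
      rcases hii with h | h
      · have h0' : 0 ≤ (a j₀) ^ p := Real.rpow_nonneg (ha j₀).1 _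
        nlinarith
      · by_cases hc : b ^ p < 1 - w
        · have h0' : 0 ≤ (a j₀) ^ p := Real.rpow_nonneg (ha j₀).1 _
          nlinarith
        · push_neg at hc
          have hnn : (0:ℝ) ≤ (b ^ p + w - 1) / w := by
            rw [div_nonneg_iff]; left; exact ⟨by linarith, hw0.le⟩
          have h2 : (((b ^ p + w - 1) / w) ^ (1/p)) ^ p ≤ (a j₀) ^ p :=
            Real.rpow_le_rpow (Real.rpow_nonneg hnn _) h hp.le
          rw [key _ hnn] at h2
          rw [div_le_iff₀ hw0] at h2
          linarith
    have hxj₀ : x j₀ = T j₀ ^ (1/p) :=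
      min_eq_right (Real.rpow_le_one (hTnn j₀) hT1 hq.le)
    have heq : phi w p (a j₀) (x j₀) = b := by
      have hT' : (1 - w) * T j₀ = b ^ p - w * a j₀ ^ p := by
        show (1 - w) * ((b ^ p - w * a j₀ ^ p) / (1 - w)) = _
        rw [mul_comm]; exact div_mul_cancel₀ _ h1w.ne'
      rw [phi, hxj₀, key _ (hTnn j₀), hT']
      have : w * a j₀ ^ p + (b ^ p - w * a j₀ ^ p) = b ^ p := by ring
      rw [this, key2 _ hb0]
    refine ⟨x, hx01, le_antisymm (Finset.sup'_le _ _ fun j _ => hphile j) ?_⟩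
    rw [← heq]
    exact Finset.le_sup' (fun j => phi w p (a j) (x j)) (Finset.mem_univ j₀)
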